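/- Let (α, μ) be a measure space and let H = L²(α, μ; ℂ) be the corresponding complex Hilbert space of square-integrable functions. Let ι be an index type, (ψ i)_{i ∈ ι} a Hilbert basis of H, and λ : ι → ℝ with λ i > 0 for every i ∈ ι. Let f : α → ℝ be measurable with f x ≥ 0 for μ-almost every x. Suppose φ, ξ ∈ H satisfy: (a) ξ x = −(f x) • (φ x) for μ-almost every x ∈ α, and (b) ⟪ψ i, ξ⟫ = (λ i) • ⟪ψ i, φ⟫ for every i ∈ ι (this encodes the equation Lφ = −f·φ for an operator L diagonalized by the basis (ψ i) with positive eigenvalues λ i). Then φ = 0 in L². -/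

import Mathlib

open MeasureTheory

/-- Claim 2.5 of the paper in functional-analytic form: if `L` is diagonalized by a Hilbert
basis of `L²(α, μ; ℂ)` with positive eigenvalues `lam i`, and `φ` solves `L φ = -f • φ`
with `f ≥ 0` a.e. (here `ξ` plays the role of `L φ`), then `φ = 0`. -/
theorem no_nonpositive_solution
    {α : Type*} [MeasurableSpace α] (μ : Measure α)
    {ι : Type*} (ψ : HilbertBasis ι ℂ (Lp ℂ 2 μ))
    (lam : ι → ℝ) (hlam : ∀ i : ι, 0 < lam i)
    (f : α → ℝ) (hf_meas : Measurable f) (hf_nonneg : ∀ᵐ x ∂μ, 0 ≤ f x)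
    (φ ξ : Lp ℂ 2 μ)
    (heq : ∀ᵐ x ∂μ, ξ x = (-(f x)) • (φ x))
    (hdiag : ∀ i : ι, (inner ℂ (ψ i) ξ : ℂ) = (lam i : ℂ) • (inner ℂ (ψ i) φ : ℂ)) :
    φ = 0 := by
  -- Step 1: re ⟪φ, ξ⟫ ≤ 0 from the pointwise formula.
  have hintegrable : Integrable (fun x => (inner ℂ (φ x) (ξ x) : ℂ)) μ :=
    L2.integrable_inner φ ξ
  have hre : RCLike.re (inner ℂ φ ξ : ℂ) = ∫ x, RCLike.re (inner ℂ (φ x) (ξ x) : ℂ) ∂μ := by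
    rw [MeasureTheory.L2.inner_def, integral_re hintegrable]
  have hle0 : RCLike.re (inner ℂ φ ξ : ℂ) ≤ 0 := by
    rw [hre]
    refine integral_nonpos_of_ae ?_
    filter_upwards [heq, hf_nonneg] with x hx hfx
    rw [hx, RCLike.inner_apply', Complex.real_smul, mul_left_comm,
      mul_comm ((starRingEnd ℂ) (φ x)), Complex.mul_conj, ← Complex.ofReal_mul]
    show RCLike.re (((-f x * Complex.normSq (φ x) : ℝ) : ℂ)) ≤ 0
    exact (RCLike.ofReal_re _).trans_le (mul_nonpos_of_nonpos_of_nonneg (by linarith) (Complex.normSq_nonneg _))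
  -- Step 2: re ⟪φ, ξ⟫ is the sum of lam i * ‖⟪ψ i, φ⟫‖², each term nonnegative.
  have hsum : HasSum (fun i => (inner ℂ φ (ψ i) : ℂ) * (inner ℂ (ψ i) ξ : ℂ)) (inner ℂ φ ξ : ℂ) :=
    ψ.hasSum_inner_mul_inner φ ξ
  have key : ∀ (c : ℂ) (r : ℝ), c * ((r : ℂ) • (starRingEnd ℂ) c)
      = ((r * ‖(starRingEnd ℂ) c‖ ^ 2 : ℝ) : ℂ) := by
    intro c r
    rw [smul_eq_mul, mul_left_comm, Complex.mul_conj]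
    push_cast [Complex.normSq_eq_norm_sq, Complex.norm_conj]
    ring
  have hterm : ∀ i, (inner ℂ φ (ψ i) : ℂ) * (inner ℂ (ψ i) ξ : ℂ)
      = ((lam i * ‖(inner ℂ (ψ i) φ : ℂ)‖ ^ 2 : ℝ) : ℂ) := by
    intro i
    rw [hdiag i, ← inner_conj_symm (ψ i) φ]
    exact key _ _
  simp only [hterm] at hsum
  have hsum' : HasSum (fun i => lam i * ‖(inner ℂ (ψ i) φ : ℂ)‖ ^ 2)
      (RCLike.re (inner ℂ φ ξ : ℂ)) := by
    have h := Complex.reCLM.hasSum hsum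
    simp only [Complex.reCLM_apply, Complex.ofReal_re] at h
    exact h
  -- Step 3: each term is ≤ the sum ≤ 0, and nonneg, hence 0.
  have hzero : ∀ i, (inner ℂ (ψ i) φ : ℂ) = 0 := by
    intro i
    have hnn : ∀ j, 0 ≤ lam j * ‖(inner ℂ (ψ j) φ : ℂ)‖ ^ 2 := fun j =>
      mul_nonneg (hlam j).le (sq_nonneg _)
    have hle := le_hasSum hsum' i (fun j _ => hnn j)
    have h0 : lam i * ‖(inner ℂ (ψ i) φ : ℂ)‖ ^ 2 = 0 := le_antisymm (hle.trans hle0) (hnn i)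
    have hn : ‖(inner ℂ (ψ i) φ : ℂ)‖ ^ 2 = 0 := by
      rcases mul_eq_zero.mp h0 with h | h
      · exact absurd h (hlam i).ne'
      · exact h
    have := (pow_eq_zero_iff two_ne_zero).mp hn
    simpa using this
  -- Step 4: conclude φ = 0.
  have hrepr : ψ.repr φ = 0 := by
    ext i
    simp [ψ.repr_apply_apply, hzero i]
  have := ψ.repr.injective (by simpa using hrepr)
  simpa using this
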